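/- Let A be an n×n real matrix with nonnegative entries such that A^k has zero diagonal for every k ∈ {1,…,n}. Then 1 is not an eigenvalue of A, i.e., I - A is invertible. -/

import Mathlib

/-- Entries of powers of a nonnegative matrix are nonnegative. -/
lemma pow_entry_nonneg {n : ℕ} (A : Matrix (Fin n) (Fin n) ℝ)
    (hpos : ∀ i j, 0 ≤ A i j) (k : ℕ) : ∀ i j, 0 ≤ (A ^ k) i j := by
  induction k with
  | zero => intro i j; simp [Matrix.one_apply]; positivity
  | succ k ih =>
    intro i j
    rw [pow_succ, Matrix.mul_apply]
    exact Finset.sum_nonneg fun m _ => mul_nonneg (ih i m) (hpos m j)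

/-- A single product term is at most the corresponding entry of the product,
for nonnegative matrices. -/
lemma single_le_mul_entry {n : ℕ} (M N : Matrix (Fin n) (Fin n) ℝ)
    (hM : ∀ i j, 0 ≤ M i j) (hN : ∀ i j, 0 ≤ N i j) (i p j : Fin n) :
    M i p * N p j ≤ (M * N) i j := by
  rw [Matrix.mul_apply]
  exact Finset.single_le_sum (fun m _ => mul_nonneg (hM i m) (hN m j))
    (Finset.mem_univ p)

/-- Extract a positive walk from a nonzero entry of a power. -/
lemma exists_walk {n : ℕ} (A : Matrix (Fin n) (Fin n) ℝ)
    (k : ℕ) (i j : Fin n) (h : (A ^ k) i j ≠ 0) :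
    ∃ f : ℕ → Fin n, f 0 = i ∧ f k = j ∧ ∀ t < k, A (f t) (f (t + 1)) ≠ 0 := by
  induction k generalizing j with
  | zero =>
    simp only [pow_zero, Matrix.one_apply, ne_eq, ite_eq_right_iff, one_ne_zero] at h
    have hij : i = j := by by_contra hij; exact h fun h' => absurd h' hij
    exact ⟨fun _ => i, rfl, hij, fun t ht => absurd ht (Nat.not_lt_zero t)⟩
  | succ k ih =>
    rw [pow_succ, Matrix.mul_apply] at h
    obtain ⟨m, -, hm⟩ := Finset.exists_ne_zero_of_sum_ne_zero h
    have h1 : (A ^ k) i m ≠ 0 := fun h0 => hm (by rw [h0, zero_mul])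
    have h2 : A m j ≠ 0 := fun h0 => hm (by rw [h0, mul_zero])
    obtain ⟨f, hf0, hfk, hfs⟩ := ih m h1
    refine ⟨fun t => if t = k + 1 then j else f t, by simp [hf0], by simp, ?_⟩
    intro t ht
    rcases Nat.lt_or_ge t k with h' | h'
    · have ht1 : t + 1 ≠ k + 1 := by omega
      have ht0 : t ≠ k + 1 := by omega
      simpa [ht0, ht1, show t ≠ k by omega] using hfs t h'
    · have htk : t = k := by omega
      subst htk
      simpa [Nat.lt_irrefl, hfk] using h2

/-- A positive walk yields a positive entry of the corresponding power. -/
lemma walk_pos {n : ℕ} (A : Matrix (Fin n) (Fin n) ℝ)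
    (hpos : ∀ i j, 0 ≤ A i j) (f : ℕ → Fin n) (a : ℕ) :
    ∀ m, (∀ t, a ≤ t → t < a + m → A (f t) (f (t + 1)) ≠ 0) →
      (A ^ m) (f a) (f (a + m)) ≠ 0 := by
  intro m
  induction m with
  | zero => intro _; simp [Matrix.one_apply]
  | succ m ih =>
    intro hsteps
    have h1 : (A ^ m) (f a) (f (a + m)) ≠ 0 :=
      ih fun t h1 h2 => hsteps t h1 (by omega)
    have h2 : A (f (a + m)) (f (a + m + 1)) ≠ 0 :=
      hsteps (a + m) (by omega) (by omega)
    have hle := single_le_mul_entry (A ^ m) A (pow_entry_nonneg A hpos m) hpos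
      (f a) (f (a + m)) (f (a + m + 1))
    have hp1 : 0 < (A ^ m) (f a) (f (a + m)) :=
      lt_of_le_of_ne (pow_entry_nonneg A hpos m _ _) (Ne.symm h1)
    have hp2 : 0 < A (f (a + m)) (f (a + m + 1)) :=
      lt_of_le_of_ne (hpos _ _) (Ne.symm h2)
    have : 0 < (A ^ m * A) (f a) (f (a + m + 1)) :=
      lt_of_lt_of_le (mul_pos hp1 hp2) hle
    rw [← pow_succ] at this
    have : (A ^ (m + 1)) (f a) (f (a + (m + 1))) ≠ 0 := by
      rw [show a + (m + 1) = a + m + 1 by ring]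
      exact ne_of_gt this
    exact this

lemma pow_n_eq_zero {n : ℕ} (A : Matrix (Fin n) (Fin n) ℝ)
    (hpos : ∀ i j, 0 ≤ A i j)
    (hdiag : ∀ k ∈ Finset.Icc 1 n, ∀ i, (A ^ k) i i = 0) :
    A ^ n = 0 := by
  ext i j
  by_contra h
  replace h : (A ^ n) i j ≠ 0 := by simpa using h
  obtain ⟨f, hf0, hfn, hsteps⟩ := exists_walk A n i j h
  -- pigeonhole: f restricted to Fin (n+1) is not injective
  have hcard : Fintype.card (Fin n) < Fintype.card (Fin (n + 1)) := by simp
  obtain ⟨a, b, hab, heq⟩ :=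
    Fintype.exists_ne_map_eq_of_card_lt (fun t : Fin (n + 1) => f t.val) hcard
  wlog hlt : (a : ℕ) < (b : ℕ) generalizing a b
  · exact this b a hab.symm heq.symm ((Ne.lt_or_gt (Fin.val_ne_of_ne hab)).resolve_left hlt)
  have hmem : (b : ℕ) - a ∈ Finset.Icc 1 n := by
    have hb := b.isLt
    simp only [Finset.mem_Icc]; omega
  have hzero := hdiag _ hmem (f a)
  have hne : (A ^ ((b : ℕ) - a)) (f a) (f ((a : ℕ) + ((b : ℕ) - a))) ≠ 0 :=
    walk_pos A hpos f a _ (fun t h1 h2 => hsteps t (by omega))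
  rw [show (a : ℕ) + ((b : ℕ) - a) = b by omega] at hne
  exact hne (heq ▸ hzero)

theorem stmt_1 (n : ℕ) (A : Matrix (Fin n) (Fin n) ℝ)
    (hpos : ∀ i j, 0 ≤ A i j)
    (hdiag : ∀ k ∈ Finset.Icc 1 n, ∀ i, (A ^ k) i i = 0) :
    (¬ ∃ x : Fin n → ℝ, x ≠ 0 ∧ A.mulVec x = x) ∧ IsUnit (1 - A) := by
  have hnil : IsNilpotent A := ⟨n, pow_n_eq_zero A hpos hdiag⟩
  constructor
  · rintro ⟨x, hx, hAx⟩
    have hpow : ∀ k : ℕ, (A ^ k).mulVec x = x := by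
      intro k
      induction k with
      | zero => simp
      | succ k ih =>
        rw [pow_succ, ← Matrix.mulVec_mulVec, hAx, ih]
    have := hpow n
    rw [pow_n_eq_zero A hpos hdiag] at this
    simp [Matrix.zero_mulVec] at this
    exact hx this.symm
  · exact IsNilpotent.isUnit_one_sub hnil
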